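/- Let H be a directed graph, W ⊆ V(H) a set of vertices such that the subgraph induced by W is connected, and σ : W → G a labelling by a finite abelian group G. An assignment f from the boundary edges ∂(W) to G extends to a solution of the subsystem A(W,σ) (the vertex equations at all v ∈ W) if and only if f satisfies the single boundary equation Σ_{e∈∂_+(W)} f(e) − Σ_{e∈∂_−(W)} f(e) = Σ_{v∈W} σ(v). -/

import Mathlib

open Finset

lemma aux_fiber {V E G : Type*} [Fintype E] [DecidableEq V] [AddCommMonoid G]
    (W : Finset V) (key : E → V) (P : E → Prop) [DecidablePred P]
    (hP : ∀ e, P e → key e ∈ W) (x : E → G) :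
    ∑ v ∈ W, ∑ e ∈ Finset.univ.filter (fun e => key e = v ∧ P e), x e
      = ∑ e ∈ Finset.univ.filter P, x e := by
  rw [← Finset.sum_fiberwise_of_maps_to (g := key)
    (fun e he => hP e (Finset.mem_filter.mp he).2) x]
  refine Finset.sum_congr rfl fun v hv => Finset.sum_congr ?_ fun _ _ => rfl
  ext e; simp [Finset.mem_filter, and_comm]

lemma aux_single {V E : Type*} [Fintype E] [DecidableEq E] [DecidableEq V] (tail head : E → V)
    (e0 : E) (c : ℤ) (u : V) :
    (∑ e ∈ Finset.univ.filter (fun e => tail e = u), (if e = e0 then c else 0)) -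
    (∑ e ∈ Finset.univ.filter (fun e => head e = u), (if e = e0 then c else 0)) =
    (if tail e0 = u then c else 0) - (if head e0 = u then c else 0) := by
  rw [Finset.sum_ite_eq' , Finset.sum_ite_eq']
  simp [Finset.mem_filter]

lemma aux_flow {V E : Type*} [Fintype E] [DecidableEq V] (tail head : E → V) (W : Finset V)
    (a b : ↥W)
    (h : (SimpleGraph.fromRel
      (fun v w : ↥W => ∃ e, tail e = (v : V) ∧ head e = (w : V))).Reachable a b) :
    ∃ p : E → ℤ, (∀ e, p e ≠ 0 → tail e ∈ W ∧ head e ∈ W) ∧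
      ∀ u : V, ((∑ e ∈ Finset.univ.filter (fun e => tail e = u), p e) -
        (∑ e ∈ Finset.univ.filter (fun e => head e = u), p e)) =
        (if u = (b : V) then 1 else 0) - (if u = (a : V) then 1 else 0) := by
  classical
  obtain ⟨w⟩ := h
  induction w with
  | nil => exact ⟨0, fun e he => absurd rfl he, fun u => by simp⟩
  | @cons a c b hadj w ih =>
    obtain ⟨p, hsupp, hdiv⟩ := ih
    rw [SimpleGraph.fromRel_adj] at hadj
    obtain ⟨hne, hedge⟩ := hadj
    have hac : (a : V) ≠ (c : V) := fun h => hne (Subtype.ext h)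
    have : ∃ q : E → ℤ, (∀ e, q e ≠ 0 → tail e ∈ W ∧ head e ∈ W) ∧
        ∀ u : V, ((∑ e ∈ Finset.univ.filter (fun e => tail e = u), q e) -
          (∑ e ∈ Finset.univ.filter (fun e => head e = u), q e)) =
          (if u = (c : V) then 1 else 0) - (if u = (a : V) then 1 else 0) := by
      rcases hedge with ⟨e0, ht, hh⟩ | ⟨e0, ht, hh⟩
      · refine ⟨fun e => if e = e0 then -1 else 0, ?_, ?_⟩
        · intro e he
          have : e = e0 := by by_contra hne'; simp [hne'] at he
          subst this; rw [ht, hh]; exact ⟨a.2, c.2⟩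
        · intro u
          rw [aux_single tail head e0 (-1) u, ht, hh]
          rcases eq_or_ne u (a : V) with h1 | h1 <;> rcases eq_or_ne u (c : V) with h2 | h2 <;>
            simp [h1, h2, eq_comm, hac, hac.symm]
      · refine ⟨fun e => if e = e0 then 1 else 0, ?_, ?_⟩
        · intro e he
          have : e = e0 := by by_contra hne'; simp [hne'] at he
          subst this; rw [ht, hh]; exact ⟨c.2, a.2⟩
        · intro u
          rw [aux_single tail head e0 1 u, ht, hh]
          rcases eq_or_ne u (a : V) with h1 | h1 <;> rcases eq_or_ne u (c : V) with h2 | h2 <;>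
            simp [h1, h2, eq_comm, hac, hac.symm]
    obtain ⟨q, hqsupp, hqdiv⟩ := this
    refine ⟨p + q, ?_, ?_⟩
    · intro e he
      rcases eq_or_ne (p e) 0 with hp | hp
      · exact hqsupp e (by simpa [Pi.add_apply, hp] using he)
      · exact hsupp e hp
    · intro u
      have h1 := hdiv u
      have h2 := hqdiv u
      simp only [Pi.add_apply, Finset.sum_add_distrib]
      omega

lemma aux_total {V E G : Type*} [AddCommGroup G] [Fintype E] [DecidableEq V]
    (tail head : E → V) (W : Finset V) (x : E → G) :
    ∑ v ∈ W, ((∑ e ∈ Finset.univ.filter (fun e => tail e = v), x e) -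
      (∑ e ∈ Finset.univ.filter (fun e => head e = v), x e)) =
    (∑ e ∈ Finset.univ.filter (fun e => tail e ∈ W ∧ head e ∉ W), x e) -
    (∑ e ∈ Finset.univ.filter (fun e => head e ∈ W ∧ tail e ∉ W), x e) := by
  classical
  rw [Finset.sum_sub_distrib]
  have h1 : ∑ v ∈ W, ∑ e ∈ Finset.univ.filter (fun e => tail e = v), x e
      = ∑ e ∈ Finset.univ.filter (fun e => tail e ∈ W), x e := by
    rw [← aux_fiber W tail (fun e => tail e ∈ W) (fun e he => he) x]
    refine Finset.sum_congr rfl fun v hv => Finset.sum_congr ?_ fun _ _ => rfl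
    ext e; simp only [mem_filter, mem_univ, true_and]
    exact ⟨fun h => ⟨h, h ▸ hv⟩, fun h => h.1⟩
  have h2 : ∑ v ∈ W, ∑ e ∈ Finset.univ.filter (fun e => head e = v), x e
      = ∑ e ∈ Finset.univ.filter (fun e => head e ∈ W), x e := by
    rw [← aux_fiber W head (fun e => head e ∈ W) (fun e he => he) x]
    refine Finset.sum_congr rfl fun v hv => Finset.sum_congr ?_ fun _ _ => rfl
    ext e; simp only [mem_filter, mem_univ, true_and]
    exact ⟨fun h => ⟨h, h ▸ hv⟩, fun h => h.1⟩
  have h3 : ∑ e ∈ Finset.univ.filter (fun e => tail e ∈ W), x e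
      = (∑ e ∈ Finset.univ.filter (fun e => tail e ∈ W ∧ head e ∈ W), x e)
        + ∑ e ∈ Finset.univ.filter (fun e => tail e ∈ W ∧ head e ∉ W), x e := by
    rw [← Finset.sum_filter_add_sum_filter_not
      (Finset.univ.filter (fun e => tail e ∈ W)) (fun e => head e ∈ W) x,
      Finset.filter_filter, Finset.filter_filter]
  have h4 : ∑ e ∈ Finset.univ.filter (fun e => head e ∈ W), x e
      = (∑ e ∈ Finset.univ.filter (fun e => tail e ∈ W ∧ head e ∈ W), x e)
        + ∑ e ∈ Finset.univ.filter (fun e => head e ∈ W ∧ tail e ∉ W), x e := by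
    rw [← Finset.sum_filter_add_sum_filter_not
      (Finset.univ.filter (fun e => head e ∈ W)) (fun e => tail e ∈ W) x,
      Finset.filter_filter, Finset.filter_filter]
    congr 2
    ext e; simp [and_comm]
  rw [h1, h2, h3, h4]
  abel

/-- For a set of vertices `W` inducing a connected subgraph, an assignment to the
boundary edges extends to a solution of the vertex equations at all `v ∈ W` iff it
satisfies the single boundary equation. -/
theorem stmt9 (G V E : Type*) [AddCommGroup G] [Fintype G]
    [Fintype V] [Fintype E] [DecidableEq V]
    (tail head : E → V) (W : Finset V)
    (hconn : (SimpleGraph.fromRel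
      (fun v w : ↥W => ∃ e, tail e = (v : V) ∧ head e = (w : V))).Connected)
    (σ : V → G) (f : E → G) :
    (∃ x : E → G,
      (∀ e : E, (tail e ∈ W ∧ head e ∉ W) ∨ (head e ∈ W ∧ tail e ∉ W) → x e = f e) ∧
      ∀ v ∈ W,
        (∑ e ∈ Finset.univ.filter (fun e => tail e = v), x e) -
        (∑ e ∈ Finset.univ.filter (fun e => head e = v), x e) = σ v) ↔
    (∑ e ∈ Finset.univ.filter (fun e => tail e ∈ W ∧ head e ∉ W), f e) -
    (∑ e ∈ Finset.univ.filter (fun e => head e ∈ W ∧ tail e ∉ W), f e) =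
      ∑ v ∈ W, σ v := by
  classical
  constructor
  · rintro ⟨x, hbd, heq⟩
    have hsum : ∑ v ∈ W, ((∑ e ∈ Finset.univ.filter (fun e => tail e = v), x e) -
        (∑ e ∈ Finset.univ.filter (fun e => head e = v), x e)) = ∑ v ∈ W, σ v :=
      Finset.sum_congr rfl heq
    rw [aux_total tail head W x] at hsum
    rw [← hsum]
    congr 1
    · exact Finset.sum_congr rfl fun e he =>
        (hbd e (Or.inl (Finset.mem_filter.mp he).2)).symm
    · exact Finset.sum_congr rfl fun e he =>
        (hbd e (Or.inr (Finset.mem_filter.mp he).2)).symm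
  · intro hbeq
    obtain ⟨r⟩ := hconn.nonempty
    set bnd : V → G := fun v =>
      (∑ e ∈ Finset.univ.filter (fun e => tail e = v ∧ head e ∉ W), f e) -
      (∑ e ∈ Finset.univ.filter (fun e => head e = v ∧ tail e ∉ W), f e) with hbnd
    set d : V → G := fun v => σ v - bnd v with hd
    have hd0 : ∑ v ∈ W, d v = 0 := by
      have ht : ∑ v ∈ W, ∑ e ∈ Finset.univ.filter (fun e => tail e = v ∧ head e ∉ W), f e
          = ∑ e ∈ Finset.univ.filter (fun e => tail e ∈ W ∧ head e ∉ W), f e := by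
        rw [← aux_fiber W tail (fun e => tail e ∈ W ∧ head e ∉ W) (fun e he => he.1) f]
        refine Finset.sum_congr rfl fun v hv => Finset.sum_congr ?_ fun _ _ => rfl
        ext e; simp only [mem_filter, mem_univ, true_and]
        exact ⟨fun h => ⟨h.1, h.1 ▸ hv, h.2⟩, fun h => ⟨h.1, h.2.2⟩⟩
      have hh : ∑ v ∈ W, ∑ e ∈ Finset.univ.filter (fun e => head e = v ∧ tail e ∉ W), f e
          = ∑ e ∈ Finset.univ.filter (fun e => head e ∈ W ∧ tail e ∉ W), f e := by
        rw [← aux_fiber W head (fun e => head e ∈ W ∧ tail e ∉ W) (fun e he => he.1) f]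
        refine Finset.sum_congr rfl fun v hv => Finset.sum_congr ?_ fun _ _ => rfl
        ext e; simp only [mem_filter, mem_univ, true_and]
        exact ⟨fun h => ⟨h.1, h.1 ▸ hv, h.2⟩, fun h => ⟨h.1, h.2.2⟩⟩
      simp only [hd, hbnd, Finset.sum_sub_distrib, ht, hh]
      rw [hbeq]; abel
    choose p hpsupp hpdiv using fun v : ↥W => aux_flow tail head W r v (hconn.preconnected r v)
    refine ⟨fun e => (if (tail e ∈ W ∧ head e ∉ W) ∨ (head e ∈ W ∧ tail e ∉ W)
        then f e else 0) + ∑ v ∈ W.attach, (p v e) • d ↑v, ?_, ?_⟩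
    · intro e he
      have hz : ∀ v ∈ W.attach, (p v e) • d ↑v = (0 : G) := by
        intro v _
        have hpe : p v e = 0 := by
          by_contra h
          obtain ⟨h1, h2⟩ := hpsupp v e h
          rcases he with ⟨_, hn⟩ | ⟨_, hn⟩ <;> exact hn (by assumption)
        simp [hpe]
      have hzsum : ∑ v ∈ W.attach, (p v e) • d ↑v = (0 : G) := Finset.sum_eq_zero hz
      show (if (tail e ∈ W ∧ head e ∉ W) ∨ (head e ∈ W ∧ tail e ∉ W) then f e else 0)
          + ∑ v ∈ W.attach, (p v e) • d ↑v = f e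
      rw [hzsum, add_zero, if_pos he]
    · intro u hu
      simp only [Finset.sum_add_distrib]
      have hA : ∑ e ∈ Finset.univ.filter (fun e => tail e = u),
          (if (tail e ∈ W ∧ head e ∉ W) ∨ (head e ∈ W ∧ tail e ∉ W) then f e else 0)
          = ∑ e ∈ Finset.univ.filter (fun e => tail e = u ∧ head e ∉ W), f e := by
        rw [← Finset.sum_filter, Finset.filter_filter]
        refine Finset.sum_congr ?_ fun _ _ => rfl
        ext e; simp only [mem_filter, mem_univ, true_and]
        constructor
        · rintro ⟨h1, ⟨_, h3⟩ | ⟨_, h3⟩⟩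
          · exact ⟨h1, h3⟩
          · exact absurd (h1 ▸ hu) h3
        · rintro ⟨h1, h2⟩; exact ⟨h1, Or.inl ⟨h1 ▸ hu, h2⟩⟩
      have hB : ∑ e ∈ Finset.univ.filter (fun e => head e = u),
          (if (tail e ∈ W ∧ head e ∉ W) ∨ (head e ∈ W ∧ tail e ∉ W) then f e else 0)
          = ∑ e ∈ Finset.univ.filter (fun e => head e = u ∧ tail e ∉ W), f e := by
        rw [← Finset.sum_filter, Finset.filter_filter]
        refine Finset.sum_congr ?_ fun _ _ => rfl
        ext e; simp only [mem_filter, mem_univ, true_and]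
        constructor
        · rintro ⟨h1, ⟨_, h3⟩ | ⟨_, h3⟩⟩
          · exact absurd (h1 ▸ hu) h3
          · exact ⟨h1, h3⟩
        · rintro ⟨h1, h2⟩; exact ⟨h1, Or.inr ⟨h1 ▸ hu, h2⟩⟩
      have hC : (∑ e ∈ Finset.univ.filter (fun e => tail e = u),
            ∑ v ∈ W.attach, (p v e) • d ↑v) -
          (∑ e ∈ Finset.univ.filter (fun e => head e = u),
            ∑ v ∈ W.attach, (p v e) • d ↑v) = d u := by
        rw [Finset.sum_comm, Finset.sum_comm (s := Finset.univ.filter (fun e => head e = u)),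
          ← Finset.sum_sub_distrib]
        have step : ∀ v ∈ W.attach,
            (∑ e ∈ Finset.univ.filter (fun e => tail e = u), (p v e) • d ↑v) -
            (∑ e ∈ Finset.univ.filter (fun e => head e = u), (p v e) • d ↑v)
            = ((if u = (v : V) then (1 : ℤ) else 0) - (if u = (r : V) then 1 else 0)) • d ↑v := by
          intro v _
          rw [← Finset.sum_smul, ← Finset.sum_smul, ← sub_smul, hpdiv v u]
        rw [Finset.sum_congr rfl step]
        simp only [sub_smul, Finset.sum_sub_distrib]
        have e1 : ∑ v ∈ W.attach, (if u = (v : V) then (1 : ℤ) else 0) • d ↑v = d u := by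
          rw [Finset.sum_attach W (fun v => (if u = v then (1 : ℤ) else 0) • d v)]
          simp only [ite_smul, one_smul, zero_smul]
          rw [Finset.sum_ite_eq W u d, if_pos hu]
        have e2 : ∑ v ∈ W.attach, (if u = (r : V) then (1 : ℤ) else 0) • d ↑v
            = (if u = (r : V) then (1 : ℤ) else 0) • ∑ v ∈ W, d v := by
          rw [Finset.smul_sum, Finset.sum_attach W (fun v => (if u = (r : V) then (1 : ℤ) else 0) • d v)]
        rw [e1, e2, hd0, smul_zero, sub_zero]
      rw [hA, hB, add_sub_add_comm, hC]
      have h1 : (∑ e ∈ Finset.univ.filter (fun e => tail e = u ∧ head e ∉ W), f e) -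
          (∑ e ∈ Finset.univ.filter (fun e => head e = u ∧ tail e ∉ W), f e) = bnd u := rfl
      have h2 : d u = σ u - bnd u := rfl
      rw [h1, h2]
      abel
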